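/- With probability one, y₁ ≠ 0 and y₂ ≠ W^k · y₁ for every k ∈ {0,1,…,n−1}; in other words, a consistent pair of measurements associated with two or more nonzero elements almost surely fails the ratio test. -/

import Mathlib

open MeasureTheory ProbabilityTheory Real

/-- The uniform probability measure on the unit circle `{z ∈ ℂ : |z| = 1}`. -/
noncomputable def uniformCircle : Measure ℂ :=
  Measure.map (fun θ : ℝ => Complex.exp (θ * Complex.I))
    ((ENNReal.ofReal (2 * Real.pi))⁻¹ • (volume.restrict (Set.Ioc 0 (2 * Real.pi))))


lemma circleMap_meas : Measurable (fun θ : ℝ => Complex.exp (θ * Complex.I)) := by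
  measurability

lemma uniformCircle_univ : uniformCircle Set.univ = 1 := by
  rw [uniformCircle, Measure.map_apply circleMap_meas MeasurableSet.univ]
  simp only [Set.preimage_univ, Measure.smul_apply, Measure.restrict_apply MeasurableSet.univ,
    Set.univ_inter, Real.volume_Ioc, sub_zero, smul_eq_mul]
  rw [ENNReal.inv_mul_cancel] <;> simp [Real.pi_pos, Real.pi_pos.le, ENNReal.ofReal_pos, two_pi_pos, ENNReal.mul_eq_top]

instance : IsProbabilityMeasure uniformCircle := ⟨uniformCircle_univ⟩

lemma uniformCircle_singleton (z : ℂ) : uniformCircle {z} = 0 := by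
  rw [uniformCircle, Measure.map_apply circleMap_meas (measurableSet_singleton z)]
  have hcount : ((fun θ : ℝ => Complex.exp (θ * Complex.I)) ⁻¹' {z}).Countable := by
    rcases Set.eq_empty_or_nonempty ((fun θ : ℝ => Complex.exp (θ * Complex.I)) ⁻¹' {z}) with h | ⟨θ₀, hθ₀⟩
    · simp [h]
    · apply Set.Countable.mono _ (Set.countable_range (fun k : ℤ => θ₀ + k * (2 * Real.pi)))
      intro θ hθ
      simp only [Set.mem_preimage, Set.mem_singleton_iff] at hθ hθ₀
      rw [← hθ₀, Complex.exp_eq_exp_iff_exists_int] at hθ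
      obtain ⟨k, hk⟩ := hθ
      refine ⟨k, ?_⟩
      have : (θ : ℂ) = θ₀ + k * (2 * Real.pi) := by
        have := hk
        field_simp at this ⊢
        have h2 : (θ : ℂ) * Complex.I = (↑θ₀ + ↑k * (2 * ↑Real.pi)) * Complex.I := by
          rw [this]; ring
        exact mul_right_cancel₀ Complex.I_ne_zero (h2.trans (by ring))
      exact_mod_cast this.symm
  simp only [Measure.smul_apply, Measure.restrict_apply (circleMap_meas (measurableSet_singleton z)), smul_eq_mul]
  rw [measure_mono_null Set.inter_subset_left (hcount.measure_zero _), mul_zero]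


lemma iIndepFun_congr' {Ω ι : Type*} {β : ι → Type*} [MeasurableSpace Ω]
    {m : ∀ i, MeasurableSpace (β i)} {μ : Measure Ω} {f g : ∀ i, Ω → β i}
    (h : iIndepFun (m := m) f μ) (heq : ∀ i, f i =ᵐ[μ] g i) : iIndepFun (m := m) g μ := by
  rw [iIndepFun_iff_measure_inter_preimage_eq_mul] at h ⊢
  intro S sets H
  have h1 : ∀ i ∈ S, f i ⁻¹' sets i =ᵐ[μ] g i ⁻¹' sets i := by
    intro i _
    filter_upwards [heq i] with ω hω
    show (f i ω ∈ sets i) = (g i ω ∈ sets i)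
    rw [hω]
  have h2 : (⋂ i ∈ S, f i ⁻¹' sets i) =ᵐ[μ] (⋂ i ∈ S, g i ⁻¹' sets i) := by
    rw [Filter.eventuallyEq_set]
    have : ∀ᵐ ω ∂μ, ∀ i ∈ S, f i ω = g i ω :=
      (ae_ball_iff S.countable_toSet).2 fun i _ => heq i
    filter_upwards [this] with ω hω
    simp only [Set.mem_iInter, Set.mem_preimage]
    exact ⟨fun h' i hi => (hω i hi) ▸ h' i hi, fun h' i hi => (hω i hi) ▸ h' i hi⟩
  rw [measure_congr h2.symm, h S H]
  exact Finset.prod_congr rfl fun i hi => measure_congr (h1 i hi)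

lemma key_zero {Ω : Type} [MeasurableSpace Ω] (P : Measure Ω) [IsProbabilityMeasure P]
    {n : ℕ} {r : Fin n → Ω → ℂ}
    (hindep : iIndepFun r P)
    (hdist : ∀ j, Measure.map (r j) P = uniformCircle)
    (S : Finset (Fin n)) (c : Fin n → ℂ) {j₀ : Fin n} (hj₀ : j₀ ∈ S) (hc : c j₀ ≠ 0) :
    P {ω | ∑ j ∈ S, r j ω * c j = 0} = 0 := by
  -- each r j is AEMeasurable
  have haem : ∀ j, AEMeasurable (r j) P := by
    intro j
    by_contra h
    have := Measure.map_of_not_aemeasurable h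
    rw [hdist j] at this
    have h1 : (0 : Measure ℂ) Set.univ = 1 := by rw [← this]; exact uniformCircle_univ
    simp at h1
  set r' : Fin n → Ω → ℂ := fun j => (haem j).mk (r j) with hr'
  have hmeas : ∀ j, Measurable (r' j) := fun j => (haem j).measurable_mk
  have heq : ∀ j, r j =ᵐ[P] r' j := fun j => (haem j).ae_eq_mk
  have hindep' : iIndepFun r' P := iIndepFun_congr' hindep heq
  have hdist' : Measure.map (r' j₀) P = uniformCircle := by
    rw [← Measure.map_congr (heq j₀), hdist j₀]
  -- reduce to r'
  have hae : {ω | ∑ j ∈ S, r j ω * c j = 0} =ᵐ[P] {ω | ∑ j ∈ S, r' j ω * c j = 0} := by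
    rw [Filter.eventuallyEq_set]
    have : ∀ᵐ ω ∂P, ∀ j ∈ S, r j ω = r' j ω :=
      (ae_ball_iff S.countable_toSet).2 fun j _ => heq j
    filter_upwards [this] with ω hω
    show (∑ j ∈ S, r j ω * c j = 0) ↔ (∑ j ∈ S, r' j ω * c j = 0)
    rw [Finset.sum_congr rfl fun j hj => by rw [hω j hj]]
  rw [measure_congr hae]
  -- set up independence between the j₀ coordinate and the rest
  set T := S.erase j₀ with hT
  set g : Ω → ℂ := fun ω => ∑ j ∈ T, r' j ω * c j with hg
  have hgmeas : Measurable g := by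
    apply Finset.measurable_sum
    exact fun j _ => (hmeas j).mul_const _
  have hindepgX : IndepFun g (r' j₀) P := by
    have h1 := hindep'.indepFun_finset T {j₀} (by simp [hT]) hmeas
    have h2 := h1.comp (φ := fun v : {x // x ∈ T} → ℂ => ∑ i : {x // x ∈ T}, v i * c i.1)
      (ψ := fun v : {x // x ∈ ({j₀} : Finset (Fin n))} → ℂ => v ⟨j₀, by simp⟩)
      (by apply Finset.measurable_sum; exact fun i _ => (measurable_pi_apply i).mul_const _)
      (show Measurable (fun v : {x // x ∈ ({j₀} : Finset (Fin n))} → ℂ => v ⟨j₀, by simp⟩) from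
        measurable_pi_apply _)
    convert h2 using 1
    · ext ω
      show g ω = ∑ i : {x // x ∈ T}, r' i ω * c i.1
      rw [hg]
      exact (Finset.sum_attach T fun j => r' j ω * c j).symm
    · rfl
  -- rewrite the event
  have hev : {ω | ∑ j ∈ S, r' j ω * c j = 0} = {ω | r' j₀ ω = -g ω / c j₀} := by
    ext ω
    simp only [Set.mem_setOf_eq, hg]
    rw [← Finset.add_sum_erase S _ hj₀, ← hT]
    rw [eq_div_iff hc]
    constructor
    · intro h; linear_combination h
    · intro h; linear_combination h
  rw [hev]
  -- use independence
  have hXaem : AEMeasurable (r' j₀) P := (hmeas j₀).aemeasurable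
  have hmap : Measure.map (fun ω => (g ω, r' j₀ ω)) P
      = (Measure.map g P).prod (Measure.map (r' j₀) P) :=
    (indepFun_iff_map_prod_eq_prod_map_map hgmeas.aemeasurable hXaem).1 hindepgX
  have hsetm : MeasurableSet {p : ℂ × ℂ | p.2 = -p.1 / c j₀} := by
    have : Measurable fun p : ℂ × ℂ => p.2 - (-p.1 / c j₀) := by measurability
    have := this (measurableSet_singleton (0:ℂ))
    convert this using 1
    ext p
    simp [sub_eq_zero]
  have : P {ω | r' j₀ ω = -g ω / c j₀}
      = Measure.map (fun ω => (g ω, r' j₀ ω)) P {p : ℂ × ℂ | p.2 = -p.1 / c j₀} := by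
    rw [Measure.map_apply_of_aemeasurable (hgmeas.aemeasurable.prodMk hXaem) hsetm]
    rfl
  rw [this, hmap, hdist']
  rw [Measure.prod_apply hsetm]
  have : ∀ y : ℂ, uniformCircle (Prod.mk y ⁻¹' {p : ℂ × ℂ | p.2 = -p.1 / c j₀}) = 0 := by
    intro y
    have : Prod.mk y ⁻¹' {p : ℂ × ℂ | p.2 = -p.1 / c j₀} = {-y / c j₀} := by
      ext x; simp [Set.mem_preimage]
    rw [this, uniformCircle_singleton]
  rw [lintegral_congr fun y => by rw [this y]]
  simp

/-- With `r₁,…,r_n` i.i.d. uniform on the unit circle, `W = e^{2πi/n}`,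
`S ⊆ {1,…,n}` with `|S| ≥ 2`, and nonzero `β_j` for `j ∈ S`, the measurements
`y₁ = ∑_{j∈S} r_j β_j` and `y₂ = ∑_{j∈S} r_j W^{j−1} β_j` almost surely satisfy `y₁ ≠ 0`
and `y₂ ≠ W^k y₁` for every `k ∈ {0,…,n−1}` (a multiton almost surely fails the ratio
test). -/
theorem multiton_fails_ratio_test
    {Ω : Type} [MeasurableSpace Ω] (P : Measure Ω) [IsProbabilityMeasure P]
    (n : ℕ) (hn : 2 ≤ n) (r : Fin n → Ω → ℂ)
    (hindep : iIndepFun r P)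
    (hdist : ∀ j, Measure.map (r j) P = uniformCircle)
    (S : Finset (Fin n)) (hS : 2 ≤ S.card)
    (β : Fin n → ℂ) (hβ : ∀ j ∈ S, β j ≠ 0) :
    P {ω | (∑ j ∈ S, r j ω * β j) ≠ 0 ∧
           ∀ k < n, (∑ j ∈ S, r j ω * Complex.exp (2 * Real.pi * Complex.I / n) ^ (j : ℕ) * β j)
             ≠ Complex.exp (2 * Real.pi * Complex.I / n) ^ k * (∑ j ∈ S, r j ω * β j)} = 1 := by
  set W : ℂ := Complex.exp (2 * Real.pi * Complex.I / n) with hW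
  have hprim : IsPrimitiveRoot W n := Complex.isPrimitiveRoot_exp n (by omega)
  set G : Set Ω := {ω | (∑ j ∈ S, r j ω * β j) ≠ 0 ∧
      ∀ k < n, (∑ j ∈ S, r j ω * W ^ (j : ℕ) * β j) ≠ W ^ k * (∑ j ∈ S, r j ω * β j)} with hG
  set Bad : Set Ω := {ω | ∑ j ∈ S, r j ω * β j = 0} ∪
      ⋃ k ∈ Finset.range n, {ω | ∑ j ∈ S, r j ω * ((W ^ (j : ℕ) - W ^ k) * β j) = 0} with hBad
  -- S has an element
  obtain ⟨a, ha⟩ : S.Nonempty := Finset.card_pos.1 (by omega)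
  have hBad0 : P Bad = 0 := by
    rw [hBad]
    apply measure_union_null
    · exact key_zero P hindep hdist S β ha (hβ a ha)
    · apply measure_biUnion_null_iff (Finset.range n).countable_toSet |>.2
      intro k hk
      simp only [Finset.coe_range, Set.mem_Iio] at hk
      -- find j₀ ∈ S with (j₀ : ℕ) ≠ k
      obtain ⟨j₀, hj₀S, hj₀k⟩ : ∃ j₀ ∈ S, (j₀ : ℕ) ≠ k := by
        by_contra h
        push_neg at h
        obtain ⟨b, hb, hab⟩ := Finset.exists_mem_ne (show 1 < S.card by omega) a
        exact hab (Fin.ext (by rw [h b hb, h a ha]))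
      have hc : (W ^ (j₀ : ℕ) - W ^ k) * β j₀ ≠ 0 := by
        apply mul_ne_zero _ (hβ j₀ hj₀S)
        rw [sub_ne_zero]
        intro h
        exact hj₀k (hprim.pow_inj j₀.isLt hk h)
      exact key_zero P hindep hdist S _ hj₀S hc
  have hsub : Gᶜ ⊆ Bad := by
    intro ω hω
    rw [hG] at hω
    simp only [Set.mem_compl_iff, Set.mem_setOf_eq, not_and, not_forall, not_not] at hω
    by_cases h1 : ∑ j ∈ S, r j ω * β j = 0
    · exact Set.mem_union_left _ h1
    · obtain ⟨k, hk, heq⟩ := hω h1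
      apply Set.mem_union_right
      simp only [Set.mem_iUnion, Finset.mem_range]
      refine ⟨k, hk, ?_⟩
      show ∑ j ∈ S, r j ω * ((W ^ (j : ℕ) - W ^ k) * β j) = 0
      have : ∑ j ∈ S, r j ω * ((W ^ (j : ℕ) - W ^ k) * β j)
          = (∑ j ∈ S, r j ω * W ^ (j : ℕ) * β j) - W ^ k * ∑ j ∈ S, r j ω * β j := by
        rw [Finset.mul_sum, ← Finset.sum_sub_distrib]
        exact Finset.sum_congr rfl fun j _ => by ring
      rw [this, heq, sub_self]
  have h2 : P Gᶜ = 0 := measure_mono_null hsub hBad0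
  refine le_antisymm prob_le_one ?_
  calc (1 : ENNReal) = P Set.univ := (measure_univ).symm
    _ ≤ P G + P Gᶜ := by rw [← Set.union_compl_self G]; exact measure_union_le _ _
    _ = P G := by rw [h2, add_zero]
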